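/- Let n and k be integers with 1 ≤ k < n, and let w : (0,∞) → ℝ be measurable with ∫₀^∞ s^{n−k−1} |w(s)| ds < ∞. Define ψ(r) = c_{k,n} r^{2−n} ∫₀^r s^{n−k−1} w(s) (r² − s²)^{k/2 − 1} ds (defined for those r > 0 at which the integral converges absolutely, which is almost every r > 0), define w̃(s) = s^{(n−k)/2 − 1} w(√s) and λ(s) = (1/(s Γ(k/2 + 1))) ∫₀^{s²} (s² − r)^{k/2} w̃(r) dr for s > 0. Then for every x ∈ ℝⁿ with x ≠ 0, the integral ψ̃(x) = ∫₁^∞ ψ(|x|/t) t^{−(1+n)} dt converges absolutely and ψ̃(x) = c₁ |x|^{1−n} λ(|x|), where c₁ = π^{k/2} σ_{n−k−1} / (2 σ_{n−1}). -/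

import Mathlib

open MeasureTheory

open Set

lemma img_sq_sub (s R : ℝ) (hs : 0 ≤ s) (hsR : s < R) :
    (fun u => u ^ 2 - s ^ 2) '' Ioo s R = Ioo 0 (R ^ 2 - s ^ 2) := by
  ext v
  constructor
  · rintro ⟨u, ⟨h1, h2⟩, rfl⟩
    refine ⟨by dsimp only; nlinarith, by dsimp only; nlinarith⟩
  · rintro ⟨h1, h2⟩
    refine ⟨Real.sqrt (v + s ^ 2), ⟨?_, ?_⟩, ?_⟩
    · exact (Real.lt_sqrt hs).mpr (by linarith)
    · exact (Real.sqrt_lt' (by linarith)).mpr (by linarith)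
    · dsimp only; rw [Real.sq_sqrt (by nlinarith)]; ring

lemma aux1 (s R p : ℝ) (hs : 0 < s) (hsR : s < R) (hp : -1 < p) :
    IntegrableOn (fun u => u * (u ^ 2 - s ^ 2) ^ p) (Ioo s R) ∧
    ∫ u in Ioo s R, u * (u ^ 2 - s ^ 2) ^ p
      = (R ^ 2 - s ^ 2) ^ (p + 1) / (2 * (p + 1)) := by
  have hderiv : ∀ u ∈ Ioo s R,
      HasDerivWithinAt (fun u : ℝ => u ^ 2 - s ^ 2) (2 * u) (Ioo s R) u := by
    intro u _
    simpa using ((hasDerivAt_pow 2 u).sub_const (s ^ 2)).hasDerivWithinAt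
  have hinj : InjOn (fun u : ℝ => u ^ 2 - s ^ 2) (Ioo s R) := by
    rintro a ⟨ha, _⟩ b ⟨hb, _⟩ hab
    simp only at hab
    nlinarith [sq_nonneg (a - b)]
  have himg := img_sq_sub s R hs.le hsR
  have hT : (0:ℝ) < R ^ 2 - s ^ 2 := by nlinarith
  have hgi : IntegrableOn (fun v : ℝ => v ^ p) (Ioo 0 (R ^ 2 - s ^ 2)) :=
    (intervalIntegral.intervalIntegrable_rpow' (a := 0) (b := R ^ 2 - s ^ 2) hp).1.mono_set
      Ioo_subset_Ioc_self
  have hval : ∫ v in Ioo 0 (R ^ 2 - s ^ 2), v ^ p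
      = (R ^ 2 - s ^ 2) ^ (p + 1) / (p + 1) := by
    rw [← integral_Ioc_eq_integral_Ioo, ← intervalIntegral.integral_of_le hT.le,
      integral_rpow (Or.inl hp), Real.zero_rpow (by linarith)]
    ring
  have key := integral_image_eq_integral_abs_deriv_smul measurableSet_Ioo hderiv hinj
      (fun v : ℝ => v ^ p)
  have keyi := integrableOn_image_iff_integrableOn_abs_deriv_smul measurableSet_Ioo hderiv hinj
      (fun v : ℝ => v ^ p)
  rw [himg] at key keyi
  have hcong : EqOn (fun u : ℝ => |2 * u| • ((u ^ 2 - s ^ 2) ^ p))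
      (fun u : ℝ => 2 * (u * (u ^ 2 - s ^ 2) ^ p)) (Ioo s R) := by
    intro u hu
    have h0 : (0:ℝ) < u := hs.trans hu.1
    dsimp only [smul_eq_mul]
    rw [abs_of_pos (by linarith : (0:ℝ) < 2 * u)]
    ring
  constructor
  · have h2 : IntegrableOn (fun u : ℝ => 2 * (u * (u ^ 2 - s ^ 2) ^ p)) (Ioo s R) :=
      IntegrableOn.congr_fun (keyi.1 hgi) hcong measurableSet_Ioo
    exact IntegrableOn.congr_fun (h2.const_mul (1/2 : ℝ))
      (fun u _ => by ring) measurableSet_Ioo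
  · rw [hval] at key
    rw [setIntegral_congr_fun measurableSet_Ioo hcong, integral_const_mul] at key
    have hp1 : p + 1 ≠ 0 := by linarith
    field_simp at key ⊢
    linarith

/-- `sphereVol m` is the surface area `σ_{m-1} = 2 π^{m/2} / Γ(m/2)` of the unit
sphere in `ℝ^m`. -/
noncomputable def sphereVol (m : ℕ) : ℝ := 2 * Real.pi ^ ((m : ℝ) / 2) / Real.Gamma ((m : ℝ) / 2)

/-- The constant `c_{k,n} = σ_{k-1} σ_{n-k-1} / σ_{n-1}`. -/
noncomputable def radonConst (k n : ℕ) : ℝ := sphereVol k * sphereVol (n - k) / sphereVol n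

lemma sphereVol_pos (m : ℕ) (hm : 1 ≤ m) : 0 < sphereVol m := by
  have hm' : (0:ℝ) < (m:ℝ) := by exact_mod_cast hm
  have h2 : (0:ℝ) < (m:ℝ)/2 := by positivity
  exact div_pos (by positivity) (Real.Gamma_pos_of_pos h2)


set_option maxHeartbeats 2000000 in
/-- Identity (eq:260129-11): `ψ̃(x) = ∫₁^∞ ψ(|x|/t) t^{-(1+n)} dt` converges absolutely
and equals `c₁ |x|^{1-n} λ(|x|)` with `c₁ = π^{k/2} σ_{n-k-1} / (2 σ_{n-1})`. -/
theorem stmt_14 (n k : ℕ) (hk : 1 ≤ k) (hkn : k < n) (w : ℝ → ℝ) (hw : Measurable w)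
    (hI : IntegrableOn (fun s => s ^ ((n : ℝ) - k - 1) * |w s|) (Set.Ioi 0))
    (ψ : ℝ → ℝ)
    (hψ : ∀ r : ℝ, 0 < r →
      IntegrableOn
        (fun s => s ^ ((n : ℝ) - k - 1) * w s * (r ^ 2 - s ^ 2) ^ ((k : ℝ) / 2 - 1))
        (Set.Ioo 0 r) →
      ψ r = radonConst k n * r ^ ((2 : ℝ) - n) *
        ∫ s in Set.Ioo 0 r, s ^ ((n : ℝ) - k - 1) * w s * (r ^ 2 - s ^ 2) ^ ((k : ℝ) / 2 - 1))
    (wt lam : ℝ → ℝ)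
    (hwt : ∀ s : ℝ, wt s = s ^ (((n : ℝ) - k) / 2 - 1) * w (Real.sqrt s))
    (hlam : ∀ s : ℝ, 0 < s → lam s =
      1 / (s * Real.Gamma ((k : ℝ) / 2 + 1)) *
        ∫ r in Set.Ioo 0 (s ^ 2), (s ^ 2 - r) ^ ((k : ℝ) / 2) * wt r)
    (x : EuclideanSpace ℝ (Fin n)) (hx : x ≠ 0) :
    IntegrableOn (fun t => ψ (‖x‖ / t) * t ^ (-(1 : ℝ) - n)) (Set.Ioi 1) ∧
    ∫ t in Set.Ioi 1, ψ (‖x‖ / t) * t ^ (-(1 : ℝ) - n)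
      = Real.pi ^ ((k : ℝ) / 2) * sphereVol (n - k) / (2 * sphereVol n) *
          (‖x‖ ^ ((1 : ℝ) - n) * lam ‖x‖) := by
  have hR : (0:ℝ) < ‖x‖ := norm_pos_iff.mpr hx
  set R := ‖x‖ with hRdef
  set e : ℝ := (n:ℝ) - k - 1 with he
  set p : ℝ := (k:ℝ)/2 - 1 with hpdef
  have hk1 : (1:ℝ) ≤ (k:ℝ) := by exact_mod_cast hk
  have hp : -1 < p := by rw [hpdef]; linarith
  have hp1pos : (0:ℝ) < p + 1 := by linarith
  have hkp : (k:ℝ)/2 = p + 1 := by rw [hpdef]; ring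
  set g : ℝ → ℝ := fun s => s ^ e * w s with hgdef
  have hgm : Measurable g := by
    rw [hgdef]
    fun_prop
  set ρ := volume.restrict (Set.Ioo (0:ℝ) R) with hρdef
  set Φ : ℝ × ℝ → ℝ :=
    fun q => if q.1 < q.2 then g q.1 * (q.2 * (q.2 ^ 2 - q.1 ^ 2) ^ p) else 0 with hΦdef
  have hΦm : Measurable Φ := by
    refine Measurable.ite (measurableSet_lt measurable_fst measurable_snd) ?_ measurable_const
    apply (hgm.comp measurable_fst).mul
    fun_prop
  have hIoiInter : ∀ s ∈ Set.Ioo (0:ℝ) R, Set.Ioi s ∩ Set.Ioo 0 R = Set.Ioo s R := by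
    intro s hs
    ext u
    simp only [Set.mem_inter_iff, Set.mem_Ioi, Set.mem_Ioo]
    exact ⟨fun ⟨h1, _, h3⟩ => ⟨h1, h3⟩, fun ⟨h1, h2⟩ => ⟨h1, hs.1.trans h1, h2⟩⟩
  have hIioInter : ∀ u ∈ Set.Ioo (0:ℝ) R, Set.Iio u ∩ Set.Ioo 0 R = Set.Ioo 0 u := by
    intro u hu
    ext s
    simp only [Set.mem_inter_iff, Set.mem_Iio, Set.mem_Ioo]
    exact ⟨fun ⟨h1, h2, _⟩ => ⟨h2, h1⟩, fun ⟨h1, h2⟩ => ⟨h2, h1, h2.trans (hu.2.trans_le le_rfl) |>.trans_le le_rfl⟩⟩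
  have hsliceu : ∀ s : ℝ, (fun u => Φ (s, u))
      = (Set.Ioi s).indicator (fun u => g s * (u * (u ^ 2 - s ^ 2) ^ p)) := by
    intro s
    funext u
    simp [hΦdef, Set.indicator_apply, Set.mem_Ioi]
  have hslices : ∀ u : ℝ, (fun s => Φ (s, u))
      = (Set.Iio u).indicator (fun s => g s * (u * (u ^ 2 - s ^ 2) ^ p)) := by
    intro u
    funext s
    simp [hΦdef, Set.indicator_apply, Set.mem_Iio]
  have hsliceInt : ∀ s ∈ Set.Ioo (0:ℝ) R, Integrable (fun u => Φ (s, u)) ρ := by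
    intro s hs
    rw [hsliceu s, hρdef, integrable_indicator_iff measurableSet_Ioi, IntegrableOn,
      Measure.restrict_restrict measurableSet_Ioi, hIoiInter s hs]
    exact (aux1 s R p hs.1 hs.2 hp).1.const_mul (g s)
  have hsliceVal : ∀ s ∈ Set.Ioo (0:ℝ) R,
      ∫ u, Φ (s, u) ∂ρ = g s * ((R ^ 2 - s ^ 2) ^ (p + 1) / (2 * (p + 1))) := by
    intro s hs
    rw [hsliceu s, hρdef, integral_indicator measurableSet_Ioi,
      Measure.restrict_restrict measurableSet_Ioi, hIoiInter s hs, integral_const_mul,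
      (aux1 s R p hs.1 hs.2 hp).2]
  have hsliceNorm : ∀ s ∈ Set.Ioo (0:ℝ) R,
      ∫ u, ‖Φ (s, u)‖ ∂ρ = |g s| * ((R ^ 2 - s ^ 2) ^ (p + 1) / (2 * (p + 1))) := by
    intro s hs
    have h1 : (fun u => ‖Φ (s, u)‖)
        = (Set.Ioi s).indicator (fun u => ‖g s * (u * (u ^ 2 - s ^ 2) ^ p)‖) := by
      funext u
      rw [show Φ (s, u) = (Set.Ioi s).indicator
        (fun u => g s * (u * (u ^ 2 - s ^ 2) ^ p)) u from congrFun (hsliceu s) u]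
      exact norm_indicator_eq_indicator_norm _ _
    rw [h1, hρdef, integral_indicator measurableSet_Ioi,
      Measure.restrict_restrict measurableSet_Ioi, hIoiInter s hs]
    have h2 : EqOn (fun u : ℝ => ‖g s * (u * (u ^ 2 - s ^ 2) ^ p)‖)
        (fun u : ℝ => |g s| * (u * (u ^ 2 - s ^ 2) ^ p)) (Set.Ioo s R) := by
      intro u hu
      have hu0 : 0 < u := hs.1.trans hu.1
      have hx2 : (0:ℝ) ≤ u ^ 2 - s ^ 2 := by nlinarith [hu.1, hs.1]
      dsimp only
      rw [Real.norm_eq_abs, abs_mul,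
        abs_of_nonneg (mul_nonneg hu0.le (Real.rpow_nonneg hx2 p))]
    rw [setIntegral_congr_fun measurableSet_Ioo h2, integral_const_mul,
      (aux1 s R p hs.1 hs.2 hp).2]
  have hbase : IntegrableOn (fun s => s ^ e * |w s|) (Set.Ioo 0 R) :=
    hI.mono_set Set.Ioo_subset_Ioi_self
  have cond2 : Integrable (fun s => ∫ u, ‖Φ (s, u)‖ ∂ρ) ρ := by
    refine Integrable.mono' (g := fun s => (s ^ e * |w s|) * ((R ^ 2) ^ (p + 1) / (2 * (p + 1))))
      (hbase.mul_const _) (hΦm.norm.aestronglyMeasurable.integral_prod_right') ?_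
    refine (ae_restrict_mem measurableSet_Ioo).mono (fun s hs => ?_)
    rw [hsliceNorm s hs]
    have hs2 : (0:ℝ) ≤ R ^ 2 - s ^ 2 := by nlinarith [hs.1, hs.2]
    have h1 : |g s| = s ^ e * |w s| := by
      rw [hgdef]
      dsimp only
      rw [abs_mul, abs_of_nonneg (Real.rpow_nonneg hs.1.le e)]
    rw [Real.norm_eq_abs, abs_of_nonneg (by positivity), h1]
    have h3 : (R ^ 2 - s ^ 2) ^ (p + 1) ≤ (R ^ 2) ^ (p + 1) :=
      Real.rpow_le_rpow hs2 (by nlinarith [hs.1]) hp1pos.le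
    have h4 : (0:ℝ) ≤ s ^ e * |w s| := mul_nonneg (Real.rpow_nonneg hs.1.le e) (abs_nonneg _)
    exact mul_le_mul_of_nonneg_left ((div_le_div_iff_of_pos_right (by positivity)).mpr h3) h4
  have aesm : AEStronglyMeasurable Φ (ρ.prod ρ) := hΦm.aestronglyMeasurable
  have cond1 : ∀ᵐ s ∂ρ, Integrable (fun u => Φ (s, u)) ρ :=
    (ae_restrict_mem measurableSet_Ioo).mono hsliceInt
  have HΦ : Integrable Φ (ρ.prod ρ) := (integrable_prod_iff aesm).mpr ⟨cond1, cond2⟩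
  have hu_ae : ∀ᵐ u ∂ρ, ψ u * u ^ ((n:ℝ) - 1) = radonConst k n * ∫ s, Φ (s, u) ∂ρ := by
    filter_upwards [ae_restrict_mem measurableSet_Ioo, HΦ.prod_left_ae] with u hu hInt
    have hu0 : (0:ℝ) < u := hu.1
    have hIntOn : IntegrableOn (fun s => g s * (u * (u ^ 2 - s ^ 2) ^ p)) (Set.Ioo 0 u) := by
      rw [hslices u, hρdef, integrable_indicator_iff measurableSet_Iio, IntegrableOn,
        Measure.restrict_restrict measurableSet_Iio, hIioInter u hu] at hInt
      exact hInt
    have hIntOn2 : IntegrableOn (fun s => s ^ e * w s * (u ^ 2 - s ^ 2) ^ p) (Set.Ioo 0 u) := by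
      refine IntegrableOn.congr_fun (hIntOn.const_mul u⁻¹) (fun s _ => ?_) measurableSet_Ioo
      rw [hgdef]
      dsimp only
      field_simp
    have hψu := hψ u hu0 hIntOn2
    have hΦint : ∫ s, Φ (s, u) ∂ρ
        = u * ∫ s in Set.Ioo 0 u, s ^ e * w s * (u ^ 2 - s ^ 2) ^ p := by
      rw [hslices u, hρdef, integral_indicator measurableSet_Iio,
        Measure.restrict_restrict measurableSet_Iio, hIioInter u hu, ← integral_const_mul]
      refine setIntegral_congr_fun measurableSet_Ioo (fun s _ => ?_)
      rw [hgdef]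
      dsimp only
      ring
    have hpow : u ^ ((2:ℝ) - n) * u ^ ((n:ℝ) - 1) = u := by
      rw [← Real.rpow_add hu0, show (2:ℝ) - n + ((n:ℝ) - 1) = 1 by ring, Real.rpow_one]
    rw [hψu, hΦint]
    linear_combination
      (radonConst k n * (∫ s in Set.Ioo 0 u, s ^ e * w s * (u ^ 2 - s ^ 2) ^ p)) * hpow
  have hIntSwap : Integrable (fun u => ∫ s, Φ (s, u) ∂ρ) ρ := HΦ.integral_prod_right
  have hIntPsi : IntegrableOn (fun u => ψ u * u ^ ((n:ℝ) - 1)) (Set.Ioo 0 R) := by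
    rw [← hρdef] at *
    exact (hIntSwap.const_mul (radonConst k n)).congr
      (by filter_upwards [hu_ae] with u h using h.symm)
  have hJ : ∫ u in Set.Ioo 0 R, ψ u * u ^ ((n:ℝ) - 1)
      = radonConst k n *
        ((∫ s in Set.Ioo 0 R, g s * (R ^ 2 - s ^ 2) ^ (p + 1)) * (2 * (p + 1))⁻¹) := by
    have h1 : ∫ u, ψ u * u ^ ((n:ℝ) - 1) ∂ρ
        = ∫ u, radonConst k n * ∫ s, Φ (s, u) ∂ρ ∂ρ := integral_congr_ae hu_ae
    rw [hρdef] at h1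
    rw [h1, ← hρdef, integral_const_mul]
    have h2 : ∫ u, (∫ s, Φ (s, u) ∂ρ) ∂ρ = ∫ s, (∫ u, Φ (s, u) ∂ρ) ∂ρ :=
      integral_integral_swap (f := fun u s => Φ (s, u)) HΦ.swap
    rw [h2, hρdef]
    rw [setIntegral_congr_fun measurableSet_Ioo (fun s hs => hsliceVal s hs)]
    rw [show (fun s => g s * ((R ^ 2 - s ^ 2) ^ (p + 1) / (2 * (p + 1))))
        = (fun s => g s * (R ^ 2 - s ^ 2) ^ (p + 1) * (2 * (p + 1))⁻¹) from
        funext fun s => by ring, integral_mul_const]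
  -- lambda side
  have hlamR := hlam R hR
  have himg2 : (fun s : ℝ => s ^ 2) '' Set.Ioo 0 R = Set.Ioo 0 (R ^ 2) := by
    have h := img_sq_sub 0 R le_rfl hR
    have h2 : (fun u : ℝ => u ^ 2 - 0 ^ 2) = (fun u : ℝ => u ^ 2) := funext fun u => by ring
    rw [h2] at h
    simpa using h
  have hderiv2 : ∀ s ∈ Set.Ioo (0:ℝ) R,
      HasDerivWithinAt (fun s : ℝ => s ^ 2) (2 * s) (Set.Ioo 0 R) s := by
    intro s _
    simpa using (hasDerivAt_pow 2 s).hasDerivWithinAt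
  have hinj2 : InjOn (fun s : ℝ => s ^ 2) (Set.Ioo 0 R) := by
    rintro a ⟨ha, _⟩ b ⟨hb, _⟩ hab
    simp only at hab
    nlinarith [sq_nonneg (a - b)]
  have key2 := integral_image_eq_integral_abs_deriv_smul measurableSet_Ioo hderiv2 hinj2
    (fun r => (R ^ 2 - r) ^ ((k:ℝ)/2) * wt r)
  rw [himg2] at key2
  have key2' : ∫ r in Set.Ioo 0 (R ^ 2), (R ^ 2 - r) ^ ((k:ℝ)/2) * wt r
      = 2 * ∫ s in Set.Ioo 0 R, g s * (R ^ 2 - s ^ 2) ^ (p + 1) := by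
    rw [key2, ← integral_const_mul]
    refine setIntegral_congr_fun measurableSet_Ioo (fun s hs => ?_)
    have hs0 : (0:ℝ) < s := hs.1
    have hwt2 : wt (s ^ 2) = s ^ ((n:ℝ) - k - 2) * w s := by
      rw [hwt (s ^ 2), Real.sqrt_sq hs0.le]
      congr 1
      rw [← Real.rpow_natCast s 2, ← Real.rpow_mul hs0.le]
      congr 1
      push_cast
      ring
    have hsp : s * s ^ ((n:ℝ) - k - 2) = s ^ e := by
      rw [he]
      nth_rewrite 1 [← Real.rpow_one s]
      rw [← Real.rpow_add hs0]
      congr 1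
      ring
    dsimp only [smul_eq_mul]
    rw [abs_of_pos (by linarith : (0:ℝ) < 2 * s), hwt2, hkp, hgdef]
    dsimp only
    rw [← hsp]
    ring
  -- t change of variables
  have himg3 : (fun t : ℝ => R / t) '' Set.Ioi 1 = Set.Ioo 0 R := by
    ext u
    constructor
    · rintro ⟨t, ht, rfl⟩
      have ht0 : (0:ℝ) < t := lt_trans one_pos ht
      refine ⟨by positivity, ?_⟩
      rw [div_lt_iff₀ ht0]
      nlinarith [mul_pos hR (sub_pos.mpr ht)]
    · rintro ⟨h1, h2⟩
      refine ⟨R / u, (one_lt_div h1).mpr h2, ?_⟩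
      field_simp
  have hderiv3 : ∀ t ∈ Set.Ioi (1:ℝ),
      HasDerivWithinAt (fun t : ℝ => R / t) (-(R / t ^ 2)) (Set.Ioi 1) t := by
    intro t ht
    have ht0 : (0:ℝ) < t := lt_trans one_pos ht
    have h := ((hasDerivAt_inv (ne_of_gt ht0)).const_mul R).hasDerivWithinAt
      (s := Set.Ioi (1:ℝ))
    have h2 : (fun y : ℝ => R * y⁻¹) = (fun y : ℝ => R / y) := funext fun y => by
      rw [div_eq_mul_inv]
    rw [h2] at h
    convert h using 1
    · rfl
    · rfl
    · ring
  have hinj3 : InjOn (fun t : ℝ => R / t) (Set.Ioi 1) := by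
    intro a ha b hb hab
    simp only at hab
    have ha0 : (0:ℝ) < a := lt_trans one_pos ha
    have hb0 : (0:ℝ) < b := lt_trans one_pos hb
    rw [div_eq_div_iff (ne_of_gt ha0) (ne_of_gt hb0)] at hab
    exact mul_left_cancel₀ (ne_of_gt hR) (by linarith)
  have key3 := integral_image_eq_integral_abs_deriv_smul measurableSet_Ioi hderiv3 hinj3
    (fun u => ψ u * u ^ ((n:ℝ) - 1) * R ^ (-(n:ℝ)))
  have keyi3 := integrableOn_image_iff_integrableOn_abs_deriv_smul measurableSet_Ioi
    hderiv3 hinj3 (fun u => ψ u * u ^ ((n:ℝ) - 1) * R ^ (-(n:ℝ)))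
  rw [himg3] at key3 keyi3
  have hcong3 : EqOn
      (fun t => |(-(R / t ^ 2))| • (ψ (R / t) * (R / t) ^ ((n:ℝ) - 1) * R ^ (-(n:ℝ))))
      (fun t => ψ (R / t) * t ^ (-(1:ℝ) - n)) (Set.Ioi 1) := by
    intro t ht
    have ht0 : (0:ℝ) < t := lt_trans one_pos ht
    dsimp only [smul_eq_mul]
    rw [abs_neg, abs_of_pos (by positivity), Real.div_rpow hR.le ht0.le]
    have e2 : R ^ ((n:ℝ) - 1) * R ^ (-(n:ℝ)) = R⁻¹ := by
      rw [← Real.rpow_add hR, show (n:ℝ) - 1 + -(n:ℝ) = -1 by ring, Real.rpow_neg_one]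
    have e3 : t ^ (-(1:ℝ) - n) = (t ^ 2)⁻¹ * (t ^ ((n:ℝ) - 1))⁻¹ := by
      rw [← Real.rpow_natCast t 2, ← Real.rpow_neg ht0.le, ← Real.rpow_neg ht0.le,
        ← Real.rpow_add ht0]
      congr 1
      push_cast
      ring
    rw [e3]
    linear_combination (ψ (R / t) * (t ^ 2)⁻¹ * (t ^ ((n:ℝ) - 1))⁻¹ * R) * e2 +
      (ψ (R / t) * (t ^ 2)⁻¹ * (t ^ ((n:ℝ) - 1))⁻¹) * (mul_inv_cancel₀ (ne_of_gt hR))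
  have hIntPsiR : IntegrableOn (fun u => ψ u * u ^ ((n:ℝ) - 1) * R ^ (-(n:ℝ)))
      (Set.Ioo 0 R) := hIntPsi.mul_const _
  constructor
  · exact IntegrableOn.congr_fun (keyi3.1 hIntPsiR) hcong3 measurableSet_Ioi
  · rw [← setIntegral_congr_fun measurableSet_Ioi hcong3, ← key3, integral_mul_const, hJ,
      hlamR, key2', ← hkp]
    have hGam : Real.Gamma ((k:ℝ)/2 + 1) = ((k:ℝ)/2) * Real.Gamma ((k:ℝ)/2) :=
      Real.Gamma_add_one (by positivity)
    have hGpos : (0:ℝ) < Real.Gamma ((k:ℝ)/2) := Real.Gamma_pos_of_pos (by positivity)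
    have hσn : (0:ℝ) < sphereVol n := sphereVol_pos n (le_trans hk hkn.le)
    have hRn : R ^ ((1:ℝ) - n) = R * R ^ (-(n:ℝ)) := by
      rw [show (1:ℝ) - n = 1 + -(n:ℝ) by ring, Real.rpow_add hR, Real.rpow_one]
    have hG' : Real.Gamma ((k:ℝ)/2) ≠ 0 := ne_of_gt hGpos
    have hσn' : sphereVol n ≠ 0 := ne_of_gt hσn
    have hR' : R ≠ 0 := ne_of_gt hR
    have hk0 : (k:ℝ) ≠ 0 := by positivity
    rw [hGam, hRn, radonConst,
      show sphereVol k = 2 * Real.pi ^ ((k:ℝ)/2) / Real.Gamma ((k:ℝ)/2) from rfl]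
    field_simp
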